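/- arXiv:2605.07120 — 2 statements merged into one kernel-verified Lean document; each statement's English description precedes it below -/
import Mathlib

section
/- Let I be a finite nonempty index set partitioned as I = I_1 ⊔ ⋯ ⊔ I_m, and let (B_α)_{α ∈ I} be {0,1}-valued random variables with P(B_α = 1) ≤ q for a fixed q ∈ (0,1), such that within each class I_s the variables {B_α : α ∈ I_s} are jointly independent. Put P = |I|, N_eff = P/m, and B̄ = (1/P)·∑_{α ∈ I} B_α. Then for every p ∈ [q, 1], P( B̄ ≥ p ) ≤ exp( −N_eff · D_B(p‖q) ). -/
open MeasureTheory ProbabilityTheory Filter Topology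

/-- Binary relative entropy `D_B(p‖q) = p·log(p/q) + (1−p)·log((1−p)/(1−q))`.
With Lean's convention `Real.log 0 = 0` this agrees with the continuous extension
at the endpoints (in particular `D_B(1‖q) = log(1/q)`). -/
noncomputable def binKL (p q : ℝ) : ℝ :=
  p * Real.log (p / q) + (1 - p) * Real.log ((1 - p) / (1 - q))

private lemma ennreal_rpow_sum {γ : Type*} (x : ENNReal) (hx : x ≠ 0) (hx' : x ≠ ⊤)
    (s : Finset γ) (c : γ → ℝ) : x ^ (∑ i ∈ s, c i) = ∏ i ∈ s, x ^ c i := by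
  classical
  induction s using Finset.induction_on with
  | empty => simp
  | insert _ _ h ih =>
    rw [Finset.sum_insert h, Finset.prod_insert h, ENNReal.rpow_add _ _ hx hx', ih]

/-- Colored Bernoulli KL bound: if `{0,1}`-valued random variables indexed by a finite
nonempty set, partitioned into `m` jointly-independent classes, each satisfy
`P(B_α = 1) ≤ q`, then the empirical mean `B̄` satisfies, for every `p ∈ [q,1]`,
`P(B̄ ≥ p) ≤ exp(−N_eff·D_B(p‖q))` with `N_eff = |I|/m`. -/
theorem colored_bernoulli_kl_bound
    {Ω : Type*} [MeasurableSpace Ω] (μ : Measure Ω) [IsProbabilityMeasure μ]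
    {ι : Type*} [Fintype ι] [Nonempty ι] (m : ℕ) (hm : 0 < m)
    (part : ι → Fin m)
    (B : ι → Ω → ℝ) (hBmeas : ∀ α, Measurable (B α))
    (hB01 : ∀ α ω, B α ω = 0 ∨ B α ω = 1)
    (q : ℝ) (hq : q ∈ Set.Ioo (0:ℝ) 1)
    (hqbound : ∀ α, μ {ω | B α ω = 1} ≤ ENNReal.ofReal q)
    (hindep : ∀ s : Fin m,
      iIndepFun
        (fun α : {a : ι // part a = s} => B α.1) μ)
    (Neff : ℝ) (hNeff : Neff = (Fintype.card ι : ℝ) / m) :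
    ∀ p : ℝ, p ∈ Set.Icc q 1 →
      μ {ω | p ≤ (1 / (Fintype.card ι : ℝ)) * ∑ α, B α ω} ≤
        ENNReal.ofReal (Real.exp (-Neff * binKL p q)) := by
  intro p hp
  obtain ⟨hq0, hq1⟩ := hq
  obtain ⟨hpq, hp1⟩ := hp
  have hp0 : 0 < p := lt_of_lt_of_le hq0 hpq
  have hm' : (0:ℝ) < m := by exact_mod_cast hm
  have hn : (0:ℝ) < Fintype.card ι := by exact_mod_cast Fintype.card_pos
  have hNeff0 : 0 < Neff := by rw [hNeff]; positivity
  -- class sums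
  set S : Fin m → Ω → ℝ := fun s ω => ∑ α : {a : ι // part a = s}, B α.1 ω with hS
  have hSmeas : ∀ s, Measurable (S s) :=
    fun s => Finset.measurable_sum _ (fun α _ => hBmeas α.1)
  have hB0 : ∀ α ω, 0 ≤ B α ω := by
    intro α ω; rcases hB01 α ω with h | h <;> simp [h]
  have hB1 : ∀ α ω, B α ω ≤ 1 := by
    intro α ω; rcases hB01 α ω with h | h <;> simp [h]
  have hScard : ∀ s ω, S s ω ≤ (Fintype.card {a : ι // part a = s} : ℝ) := by
    intro s ω
    calc S s ω ≤ ∑ _α : {a : ι // part a = s}, (1:ℝ) :=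
          Finset.sum_le_sum fun α _ => hB1 α.1 ω
      _ = _ := by simp
  have hsum : ∀ ω, ∑ α, B α ω = ∑ s, S s ω := fun ω =>
    (Fintype.sum_fiberwise part (fun α => B α ω)).symm
  have hcards : ∑ s : Fin m, (Fintype.card {a : ι // part a = s} : ℝ)
      = (Fintype.card ι : ℝ) := by
    have : ∑ s : Fin m, Fintype.card {a : ι // part a = s} = Fintype.card ι := by
      rw [← Fintype.card_sigma]
      exact Fintype.card_congr (Equiv.sigmaFiberEquiv part)
    exact_mod_cast this
  -- integrability of each B α
  have hBint : ∀ α : ι, Integrable (B α) μ := by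
    intro α
    refine (integrable_const (1:ℝ)).mono' (hBmeas α).aestronglyMeasurable ?_
    refine ae_of_all _ fun ω => ?_
    rw [Real.norm_eq_abs, abs_of_nonneg (hB0 α ω)]
    simpa using hB1 α ω
  have hBinteg : ∀ α, ∫ ω, B α ω ∂μ ≤ q := by
    intro α
    have hset : MeasurableSet {ω | B α ω = 1} := hBmeas α (measurableSet_singleton 1)
    have hind : ∀ ω, B α ω = Set.indicator {ω' | B α ω' = 1} (fun _ => (1:ℝ)) ω := by
      intro ω
      rcases hB01 α ω with h | h <;> simp [Set.indicator_apply, h]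
    have heq : ∫ ω, B α ω ∂μ = (μ {ω | B α ω = 1}).toReal := by
      calc ∫ ω, B α ω ∂μ
          = ∫ ω, Set.indicator {ω' | B α ω' = 1} (fun _ => (1:ℝ)) ω ∂μ :=
            integral_congr_ae (ae_of_all _ hind)
        _ = (μ {ω | B α ω = 1}).toReal := by
            rw [integral_indicator_const _ hset]; simp [measureReal_def]
    rw [heq]
    calc (μ {ω | B α ω = 1}).toReal ≤ (ENNReal.ofReal q).toReal :=
          ENNReal.toReal_mono ENNReal.ofReal_ne_top (hqbound α)
      _ = q := ENNReal.toReal_ofReal hq0.le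
  -- the main Chernoff-type bound, for every nonnegative parameter l
  have key : ∀ l : ℝ, 0 ≤ l →
      μ {ω | p ≤ (1 / (Fintype.card ι : ℝ)) * ∑ α, B α ω} ≤
        ENNReal.ofReal (Real.exp (Neff * (Real.log (1 - q + q * Real.exp l) - l * p))) := by
    intro l hl
    have hexpl1 : 1 ≤ Real.exp l := Real.one_le_exp hl
    set K : ℝ := 1 - q + q * Real.exp l with hK
    have hK1 : 1 ≤ K := by nlinarith
    have hK0 : 0 < K := lt_of_lt_of_le one_pos hK1
    -- per-variable mgf bound
    have hmgf : ∀ α : ι, mgf (B α) μ l ≤ K := by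
      intro α
      have hpt : ∀ ω, Real.exp (l * B α ω) = 1 + (Real.exp l - 1) * B α ω := by
        intro ω; rcases hB01 α ω with h | h <;> simp [h]
      have : mgf (B α) μ l = 1 + (Real.exp l - 1) * ∫ ω, B α ω ∂μ := by
        rw [mgf]
        calc ∫ ω, Real.exp (l * B α ω) ∂μ
            = ∫ ω, (1 + (Real.exp l - 1) * B α ω) ∂μ :=
              integral_congr_ae (ae_of_all _ hpt)
          _ = 1 + (Real.exp l - 1) * ∫ ω, B α ω ∂μ := by
              rw [integral_add (integrable_const 1) ((hBint α).const_mul _),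
                integral_const, integral_const_mul]
              simp
      rw [this, hK]
      have := hBinteg α
      nlinarith
    -- integrability of the class exponentials
    have hSint : ∀ s, Integrable (fun ω => Real.exp (l * S s ω)) μ := by
      intro s
      refine (integrable_const
          (Real.exp (l * (Fintype.card {a : ι // part a = s} : ℝ)))).mono'
        (((hSmeas s).const_mul l).exp).aestronglyMeasurable ?_
      refine ae_of_all _ fun ω => ?_
      rw [Real.norm_eq_abs, abs_of_pos (Real.exp_pos _)]
      exact Real.exp_le_exp.mpr (mul_le_mul_of_nonneg_left (hScard s ω) hl)
    -- per-class bound via independence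
    have hGs : ∀ s, ∫⁻ ω, ENNReal.ofReal (Real.exp (l * S s ω)) ∂μ
        ≤ ENNReal.ofReal (K ^ (Fintype.card {a : ι // part a = s})) := by
      intro s
      rw [← ofReal_integral_eq_lintegral_ofReal (hSint s)
        (ae_of_all _ fun ω => (Real.exp_pos _).le)]
      apply ENNReal.ofReal_le_ofReal
      have hmg : mgf (∑ i : {a : ι // part a = s}, B i.1) μ l
          = ∏ i : {a : ι // part a = s}, mgf (B i.1) μ l :=
        (hindep s).mgf_sum (fun i => hBmeas i.1) Finset.univ
      have heq : ∫ ω, Real.exp (l * S s ω) ∂μ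
          = mgf (∑ i : {a : ι // part a = s}, B i.1) μ l := by
        rw [mgf]
        congr 1
        funext ω
        simp [hS, Finset.sum_apply]
      rw [heq, hmg]
      calc ∏ i : {a : ι // part a = s}, mgf (B i.1) μ l
          ≤ ∏ _i : {a : ι // part a = s}, K :=
            Finset.prod_le_prod (fun i _ => mgf_nonneg) (fun i _ => hmgf i.1)
        _ = K ^ (Fintype.card {a : ι // part a = s}) := by
            simp [Finset.prod_const, Finset.card_univ]
    -- Hölder across the classes
    have hF : ∫⁻ ω, ENNReal.ofReal (Real.exp ((l / m) * ∑ α, B α ω)) ∂μ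
        ≤ ∏ s : Fin m,
            (∫⁻ ω, ENNReal.ofReal (Real.exp (l * S s ω)) ∂μ) ^ ((1:ℝ)/m) := by
      have heq : ∀ ω, ENNReal.ofReal (Real.exp ((l / m) * ∑ α, B α ω))
          = ∏ s : Fin m, (ENNReal.ofReal (Real.exp (l * S s ω))) ^ ((1:ℝ)/m) := by
        intro ω
        rw [hsum, Finset.mul_sum, Real.exp_sum,
          ENNReal.ofReal_prod_of_nonneg (fun _ _ => (Real.exp_pos _).le)]
        refine Finset.prod_congr rfl fun s _ => ?_
        rw [ENNReal.ofReal_rpow_of_pos (Real.exp_pos _)]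
        congr 1
        rw [Real.rpow_def_of_pos (Real.exp_pos _), Real.log_exp]
        congr 1
        ring
      calc ∫⁻ ω, ENNReal.ofReal (Real.exp ((l / m) * ∑ α, B α ω)) ∂μ
          = ∫⁻ ω, ∏ s : Fin m,
              (ENNReal.ofReal (Real.exp (l * S s ω))) ^ ((1:ℝ)/m) ∂μ :=
            lintegral_congr heq
        _ ≤ _ := by
            refine ENNReal.lintegral_prod_norm_pow_le Finset.univ
              (fun s _ => ((((hSmeas s).const_mul l).exp).ennreal_ofReal).aemeasurable)
              ?_ (fun s _ => by positivity)
            rw [Finset.sum_const, Finset.card_univ, Fintype.card_fin, nsmul_eq_mul]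
            field_simp
    -- Markov / Chernoff step
    have hmark : ENNReal.ofReal (Real.exp ((l / m) * (p * Fintype.card ι))) *
        μ {ω | p ≤ (1 / (Fintype.card ι : ℝ)) * ∑ α, B α ω} ≤
        ∫⁻ ω, ENNReal.ofReal (Real.exp ((l / m) * ∑ α, B α ω)) ∂μ := by
      have hsub : {ω | p ≤ (1 / (Fintype.card ι : ℝ)) * ∑ α, B α ω} ⊆
          {ω | ENNReal.ofReal (Real.exp ((l / m) * (p * Fintype.card ι))) ≤
            ENNReal.ofReal (Real.exp ((l / m) * ∑ α, B α ω))} := by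
        intro ω hω
        simp only [Set.mem_setOf_eq] at hω ⊢
        have h1 : p * (Fintype.card ι : ℝ) ≤ ∑ α, B α ω := by
          have h2 := mul_le_mul_of_nonneg_left hω hn.le
          calc p * (Fintype.card ι : ℝ) = (Fintype.card ι : ℝ) * p := mul_comm _ _
            _ ≤ (Fintype.card ι : ℝ) * ((1 / (Fintype.card ι : ℝ)) * ∑ α, B α ω) := h2
            _ = ∑ α, B α ω := by field_simp
        exact ENNReal.ofReal_le_ofReal (Real.exp_le_exp.mpr
          (mul_le_mul_of_nonneg_left h1 (by positivity)))
      calc ENNReal.ofReal (Real.exp ((l / m) * (p * Fintype.card ι))) *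
            μ {ω | p ≤ (1 / (Fintype.card ι : ℝ)) * ∑ α, B α ω}
          ≤ ENNReal.ofReal (Real.exp ((l / m) * (p * Fintype.card ι))) *
            μ {ω | ENNReal.ofReal (Real.exp ((l / m) * (p * Fintype.card ι))) ≤
              ENNReal.ofReal (Real.exp ((l / m) * ∑ α, B α ω))} :=
            mul_le_mul_right (measure_mono hsub) _
        _ ≤ _ := mul_meas_ge_le_lintegral₀
            ((((Finset.measurable_sum Finset.univ fun α _ => hBmeas α).const_mul
              (l / m)).exp).ennreal_ofReal).aemeasurable _
    -- put everything together
    have hKne0 : ENNReal.ofReal K ≠ 0 := (ENNReal.ofReal_pos.mpr hK0).ne'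
    have hcomb : ENNReal.ofReal (Real.exp ((l / m) * (p * Fintype.card ι))) *
        μ {ω | p ≤ (1 / (Fintype.card ι : ℝ)) * ∑ α, B α ω} ≤
        ENNReal.ofReal K ^ Neff := by
      refine hmark.trans (hF.trans ?_)
      calc ∏ s : Fin m, (∫⁻ ω, ENNReal.ofReal (Real.exp (l * S s ω)) ∂μ) ^ ((1:ℝ)/m)
          ≤ ∏ s : Fin m,
              (ENNReal.ofReal (K ^ (Fintype.card {a : ι // part a = s}))) ^ ((1:ℝ)/m) :=
            Finset.prod_le_prod' (fun s _ => ENNReal.rpow_le_rpow (hGs s) (by positivity))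
        _ = ∏ s : Fin m,
              ENNReal.ofReal K ^ ((Fintype.card {a : ι // part a = s} : ℝ) * (1/m)) := by
            refine Finset.prod_congr rfl fun s _ => ?_
            rw [← Real.rpow_natCast K, ← ENNReal.ofReal_rpow_of_pos hK0,
              ← ENNReal.rpow_mul]
        _ = ENNReal.ofReal K ^
              (∑ s : Fin m, (Fintype.card {a : ι // part a = s} : ℝ) * (1/m)) :=
            (ennreal_rpow_sum _ hKne0 ENNReal.ofReal_ne_top _ _).symm
        _ = ENNReal.ofReal K ^ Neff := by
            congr 1
            rw [← Finset.sum_mul, hcards, hNeff]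
            field_simp
    have hεinv : ENNReal.ofReal (Real.exp (-((l / m) * (p * Fintype.card ι)))) *
        ENNReal.ofReal (Real.exp ((l / m) * (p * Fintype.card ι))) = 1 := by
      rw [← ENNReal.ofReal_mul (Real.exp_pos _).le, ← Real.exp_add]
      simp
    calc μ {ω | p ≤ (1 / (Fintype.card ι : ℝ)) * ∑ α, B α ω}
        = ENNReal.ofReal (Real.exp (-((l / m) * (p * Fintype.card ι)))) *
          (ENNReal.ofReal (Real.exp ((l / m) * (p * Fintype.card ι))) *
            μ {ω | p ≤ (1 / (Fintype.card ι : ℝ)) * ∑ α, B α ω}) := by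
          rw [← mul_assoc, hεinv, one_mul]
      _ ≤ ENNReal.ofReal (Real.exp (-((l / m) * (p * Fintype.card ι)))) *
          (ENNReal.ofReal K ^ Neff) := mul_le_mul_right hcomb _
      _ = ENNReal.ofReal (Real.exp (Neff * (Real.log K - l * p))) := by
          rw [ENNReal.ofReal_rpow_of_pos hK0, ← ENNReal.ofReal_mul (Real.exp_pos _).le]
          congr 1
          rw [Real.rpow_def_of_pos hK0, ← Real.exp_add]
          congr 1
          rw [hNeff]
          field_simp
          ring
  -- now optimize over l
  rcases lt_or_eq_of_le hp1 with hplt | hpeq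
  · -- case p < 1 : take the optimal l
    have h1p : 0 < 1 - p := by linarith
    have h1q : 0 < 1 - q := by linarith
    set l := Real.log (p * (1 - q) / (q * (1 - p))) with hl
    have hargpos : 0 < p * (1 - q) / (q * (1 - p)) := by positivity
    have harg1 : 1 ≤ p * (1 - q) / (q * (1 - p)) := by
      rw [le_div_iff₀ (by positivity)]
      nlinarith
    have hl0 : 0 ≤ l := Real.log_nonneg harg1
    have hexp : Real.exp l = p * (1 - q) / (q * (1 - p)) := Real.exp_log hargpos
    have hKval : 1 - q + q * Real.exp l = (1 - q) / (1 - p) := by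
      rw [hexp]
      field_simp
      ring
    refine (key l hl0).trans (ENNReal.ofReal_le_ofReal (Real.exp_le_exp.mpr (le_of_eq ?_)))
    rw [hKval]
    have hlogs : Real.log ((1 - q) / (1 - p)) - l * p = -binKL p q := by
      rw [hl, binKL, Real.log_div h1q.ne' h1p.ne',
        Real.log_div (by positivity) (by positivity),
        Real.log_mul hp0.ne' h1q.ne', Real.log_mul hq0.ne' h1p.ne',
        Real.log_div hp0.ne' hq0.ne', Real.log_div h1p.ne' h1q.ne']
      ring
    rw [hlogs]
    ring
  · -- case p = 1 : take the limit l → ∞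
    subst hpeq
    have hbin : binKL 1 q = -Real.log q := by
      rw [binKL]
      norm_num [Real.log_inv]
    rw [hbin, show -Neff * -Real.log q = Neff * Real.log q by ring]
    have hinner : ∀ l : ℝ, Real.log (1 - q + q * Real.exp l) - l * 1
        = Real.log ((1 - q) * Real.exp (-l) + q) := by
      intro l
      have hpos : 0 < 1 - q + q * Real.exp l := by
        have := Real.exp_pos l
        nlinarith
      rw [mul_one, show (1 - q) * Real.exp (-l) + q
          = (1 - q + q * Real.exp l) * Real.exp (-l) by
        rw [Real.exp_neg]
        field_simp]
      rw [Real.log_mul hpos.ne' (Real.exp_pos _).ne', Real.log_exp]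
      ring
    have htend : Tendsto (fun l : ℝ => (1 - q) * Real.exp (-l) + q) atTop (𝓝 q) := by
      have h1 := Real.tendsto_exp_neg_atTop_nhds_zero.const_mul (1 - q)
      have h2 := h1.add_const q
      simpa using h2
    have hlog : Tendsto (fun l : ℝ => Real.log ((1 - q) * Real.exp (-l) + q))
        atTop (𝓝 (Real.log q)) :=
      (Real.continuousAt_log hq0.ne').tendsto.comp htend
    have hfin : Tendsto (fun l : ℝ =>
        ENNReal.ofReal (Real.exp (Neff * (Real.log (1 - q + q * Real.exp l) - l * 1))))
        atTop (𝓝 (ENNReal.ofReal (Real.exp (Neff * Real.log q)))) := by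
      have h3 : Tendsto (fun l : ℝ =>
          ENNReal.ofReal (Real.exp (Neff * Real.log ((1 - q) * Real.exp (-l) + q))))
          atTop (𝓝 (ENNReal.ofReal (Real.exp (Neff * Real.log q)))) := by
        exact (ENNReal.continuous_ofReal.tendsto _).comp
          ((Real.continuous_exp.tendsto _).comp (hlog.const_mul Neff))
      refine h3.congr fun l => ?_
      rw [hinner l]
    exact ge_of_tendsto hfin (eventually_atTop.mpr ⟨0, fun l hl => key l hl⟩)
end

section
/- Let (Ω, P) be a probability space, let r ≥ 1, and let μ_1, …, μ_r : Ω → ℝ be nonnegative measurable functions such that all products μ_a·μ_b are integrable, and define the matrix N ∈ ℝ^{r×r} by N_{ab} = E[μ_a·μ_b]. Suppose that for every a ∈ {1,…,r} there exist a measurable set Ω_a with p_a := P(Ω_a) > 0, and constants η_a > 0 and θ_a ∈ [0,1), such that for every ω ∈ Ω_a one has μ_a(ω) ≥ η_a and ∑_{b ≠ a} μ_b(ω) ≤ θ_a·μ_a(ω). Then, with p* = min_a p_a and δ* = min_a (1 − θ_a)·η_a, for every c ∈ ℝ^r: cᵀ N c ≥ p*·δ*²·‖c‖_∞² ≥ (p*·δ*²/r)·‖c‖₂².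 In particular N is positive definite. -/
open Matrix MeasureTheory Finset

/-- Dominant-response positive definiteness for a random-feature Gram matrix:
if for each index `a` there is a positive-probability set of features on which the
`a`-th mean response dominates the combined response of the others, then the matrix
`N_{ab} = E[μ_a·μ_b]` satisfies
`cᵀ N c ≥ p*·δ*²·‖c‖_∞² ≥ (p*·δ*²/r)·‖c‖₂²` for all `c`; in particular `N` is
positive definite. -/
theorem dominant_response_posdef
    {Ω : Type*} [MeasurableSpace Ω] (P : Measure Ω) [IsProbabilityMeasure P]
    (r : ℕ) [NeZero r]
    (μf : Fin r → Ω → ℝ)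
    (hmeas : ∀ a, Measurable (μf a)) (hnonneg : ∀ a ω, 0 ≤ μf a ω)
    (hint : ∀ a b, Integrable (fun ω => μf a ω * μf b ω) P)
    (N : Matrix (Fin r) (Fin r) ℝ)
    (hN : ∀ a b, N a b = ∫ ω, μf a ω * μf b ω ∂P)
    (Ωa : Fin r → Set Ω) (hΩa : ∀ a, MeasurableSet (Ωa a))
    (pa : Fin r → ℝ) (hpa : ∀ a, pa a = (P (Ωa a)).toReal)
    (hpapos : ∀ a, 0 < pa a)
    (η : Fin r → ℝ) (hη : ∀ a, 0 < η a)
    (θ : Fin r → ℝ) (hθ : ∀ a, θ a ∈ Set.Ico (0:ℝ) 1)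
    (hdom : ∀ a, ∀ ω ∈ Ωa a,
      η a ≤ μf a ω ∧ ∑ b ∈ univ.erase a, μf b ω ≤ θ a * μf a ω)
    (pstar : ℝ) (hpstar : IsLeast {x : ℝ | ∃ a, x = pa a} pstar)
    (δstar : ℝ) (hδstar : IsLeast {x : ℝ | ∃ a, x = (1 - θ a) * η a} δstar) :
    (∀ c : Fin r → ℝ,
      pstar * δstar ^ 2 * (univ.sup' univ_nonempty (fun a => |c a|)) ^ 2 ≤
        c ⬝ᵥ (N *ᵥ c) ∧
      (pstar * δstar ^ 2 / r) * ∑ a, (c a) ^ 2 ≤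
        pstar * δstar ^ 2 * (univ.sup' univ_nonempty (fun a => |c a|)) ^ 2) ∧
    N.PosDef := by

  -- positivity of pstar and δstar
  have hpstar_pos : 0 < pstar := by
    obtain ⟨⟨a0, ha0⟩, -⟩ := hpstar
    rw [ha0]; exact hpapos a0
  have hpstar_le : ∀ a, pstar ≤ pa a := fun a => hpstar.2 ⟨a, rfl⟩
  have hδ_pos : 0 < δstar := by
    obtain ⟨⟨a0, ha0⟩, -⟩ := hδstar
    rw [ha0]
    exact mul_pos (by linarith [(hθ a0).2]) (hη a0)
  have hδ_le : ∀ a, δstar ≤ (1 - θ a) * η a := fun a => hδstar.2 ⟨a, rfl⟩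
  have hrw : ∀ (c : Fin r → ℝ) (ω : Ω), (∑ a, c a * μf a ω) ^ 2
      = ∑ a, ∑ b, c a * c b * (μf a ω * μf b ω) := by
    intro c ω
    rw [sq, Finset.sum_mul_sum]
    exact Finset.sum_congr rfl fun a _ => Finset.sum_congr rfl fun b _ => by ring
  have hSint : ∀ c : Fin r → ℝ,
      Integrable (fun ω => (∑ a, c a * μf a ω) ^ 2) P := by
    intro c
    simp_rw [hrw c]
    exact integrable_finset_sum _ fun a _ =>
      integrable_finset_sum _ fun b _ => (hint a b).const_mul _
  have key : ∀ c : Fin r → ℝ,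
      c ⬝ᵥ (N *ᵥ c) = ∫ ω, (∑ a, c a * μf a ω) ^ 2 ∂P := by
    intro c
    simp_rw [hrw c]
    rw [integral_finset_sum _ (fun a _ => integrable_finset_sum _
      (fun b _ => (hint a b).const_mul _))]
    simp_rw [integral_finset_sum _ (fun b _ => (hint _ b).const_mul _),
      integral_const_mul]
    simp only [dotProduct, mulVec, dotProduct, hN, Finset.mul_sum]
    exact Finset.sum_congr rfl fun a _ => Finset.sum_congr rfl fun b _ => by ring
  -- the main lower bound
  have main : ∀ c : Fin r → ℝ,
      pstar * δstar ^ 2 * (univ.sup' univ_nonempty (fun a => |c a|)) ^ 2 ≤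
        c ⬝ᵥ (N *ᵥ c) := by
    intro c
    set M := univ.sup' univ_nonempty (fun a => |c a|) with hMdef
    obtain ⟨a, -, haM⟩ := Finset.exists_mem_eq_sup' univ_nonempty (fun a => |c a|)
    have hMle : ∀ b, |c b| ≤ M := fun b => Finset.le_sup' (fun a => |c a|) (Finset.mem_univ b)
    have hM0 : 0 ≤ M := (abs_nonneg _).trans (hMle a)
    have hpt : ∀ ω ∈ Ωa a, (δstar * M) ^ 2 ≤ (∑ b, c b * μf b ω) ^ 2 := by
      intro ω hω
      obtain ⟨hη', hθ'⟩ := hdom a ω hω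
      have h1θ : (0:ℝ) ≤ 1 - θ a := by linarith [(hθ a).2]
      have habs : δstar * M ≤ |∑ b, c b * μf b ω| := by
        have hsplit : ∑ b, c b * μf b ω
            = c a * μf a ω + ∑ b ∈ univ.erase a, c b * μf b ω :=
          (Finset.add_sum_erase univ _ (Finset.mem_univ a)).symm
        have h2 : |∑ b ∈ univ.erase a, c b * μf b ω| ≤ M * (θ a * μf a ω) := by
          calc |∑ b ∈ univ.erase a, c b * μf b ω|
              ≤ ∑ b ∈ univ.erase a, |c b * μf b ω| :=
                Finset.abs_sum_le_sum_abs _ _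
            _ ≤ ∑ b ∈ univ.erase a, M * μf b ω := by
                refine Finset.sum_le_sum fun b _ => ?_
                rw [abs_mul, abs_of_nonneg (hnonneg b ω)]
                exact mul_le_mul_of_nonneg_right (hMle b) (hnonneg b ω)
            _ = M * ∑ b ∈ univ.erase a, μf b ω := (Finset.mul_sum _ _ _).symm
            _ ≤ M * (θ a * μf a ω) := mul_le_mul_of_nonneg_left hθ' hM0
        have h3 : |c a * μf a ω| = M * μf a ω := by
          rw [abs_mul, abs_of_nonneg (hnonneg a ω), ← haM]
        have h4 : |c a * μf a ω| - |∑ b ∈ univ.erase a, c b * μf b ω|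
            ≤ |∑ b, c b * μf b ω| := by
          have h := abs_sub_abs_le_abs_sub (c a * μf a ω) (∑ b, c b * μf b ω)
          have h5 : c a * μf a ω - ∑ b, c b * μf b ω
              = -(∑ b ∈ univ.erase a, c b * μf b ω) := by rw [hsplit]; ring
          rw [h5, abs_neg] at h
          linarith
        calc δstar * M ≤ ((1 - θ a) * η a) * M :=
              mul_le_mul_of_nonneg_right (hδ_le a) hM0
          _ ≤ ((1 - θ a) * μf a ω) * M :=
              mul_le_mul_of_nonneg_right
                (mul_le_mul_of_nonneg_left hη' h1θ) hM0
          _ = M * μf a ω - M * (θ a * μf a ω) := by ring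
          _ ≤ |c a * μf a ω| - |∑ b ∈ univ.erase a, c b * μf b ω| := by
              rw [h3]; linarith
          _ ≤ |∑ b, c b * μf b ω| := h4
      calc (δstar * M) ^ 2 ≤ |∑ b, c b * μf b ω| ^ 2 :=
            pow_le_pow_left₀ (by positivity) habs 2
        _ = (∑ b, c b * μf b ω) ^ 2 := sq_abs _
    rw [key c]
    calc pstar * δstar ^ 2 * M ^ 2 ≤ pa a * δstar ^ 2 * M ^ 2 := by
          have := mul_le_mul_of_nonneg_right
            (mul_le_mul_of_nonneg_right (hpstar_le a) (sq_nonneg δstar))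
            (sq_nonneg M)
          linarith
      _ = (δstar * M) ^ 2 * (P (Ωa a)).toReal := by rw [hpa a]; ring
      _ = ∫ _ω in Ωa a, (δstar * M) ^ 2 ∂P := by
          rw [setIntegral_const, smul_eq_mul, mul_comm]; rfl
      _ ≤ ∫ ω in Ωa a, (∑ b, c b * μf b ω) ^ 2 ∂P :=
          setIntegral_mono_on (integrable_const _).integrableOn
            (hSint c).integrableOn (hΩa a) hpt
      _ ≤ ∫ ω, (∑ b, c b * μf b ω) ^ 2 ∂P :=
          setIntegral_le_integral (hSint c)
            (Filter.Eventually.of_forall fun ω => sq_nonneg _)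
  have hrpos : (0:ℝ) < r := by
    exact_mod_cast Nat.pos_of_ne_zero (NeZero.ne r)
  refine ⟨fun c => ⟨main c, ?_⟩, ?_⟩
  · set M := univ.sup' univ_nonempty (fun a => |c a|) with hMdef
    have hMle : ∀ b, |c b| ≤ M := fun b => Finset.le_sup' (fun a => |c a|) (Finset.mem_univ b)
    have hsum : ∑ a, (c a) ^ 2 ≤ (r : ℝ) * M ^ 2 := by
      calc ∑ a, (c a) ^ 2 ≤ ∑ _a : Fin r, M ^ 2 :=
            Finset.sum_le_sum fun a _ => by
              rw [← sq_abs]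
              exact pow_le_pow_left₀ (abs_nonneg _) (hMle a) 2
        _ = (r : ℝ) * M ^ 2 := by
            simp [Finset.sum_const, Finset.card_univ]
    have h := mul_le_mul_of_nonneg_left hsum
      (le_of_lt (by positivity : (0:ℝ) < pstar * δstar ^ 2 / r))
    calc pstar * δstar ^ 2 / r * ∑ a, (c a) ^ 2
        ≤ pstar * δstar ^ 2 / r * ((r : ℝ) * M ^ 2) := h
      _ = pstar * δstar ^ 2 * M ^ 2 := by
          field_simp
  · rw [posDef_iff_dotProduct_mulVec]
    constructor
    · show Nᴴ = N
      ext a b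
      rw [conjTranspose_apply, star_trivial, hN, hN]
      exact integral_congr_ae (Filter.Eventually.of_forall fun ω => mul_comm _ _)
    · intro x hx
      have hstar : star x = x := by
        funext i; exact star_trivial _
      rw [hstar]
      obtain ⟨i, hi⟩ := Function.ne_iff.mp hx
      have hMpos : 0 < univ.sup' univ_nonempty (fun a => |x a|) :=
        lt_of_lt_of_le (abs_pos.mpr hi) (Finset.le_sup' (fun a => |x a|) (Finset.mem_univ i))
      calc (0:ℝ) < pstar * δstar ^ 2 *
            (univ.sup' univ_nonempty (fun a => |x a|)) ^ 2 := by positivity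
        _ ≤ x ⬝ᵥ (N *ᵥ x) := main x
end
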